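/- arXiv:2210.13941 — 6 statements merged into one kernel-verified Lean document; each statement's English description precedes it below -/
import Mathlib

section
/- Let G be a finite simple undirected graph with adjacency matrix A. For α → 0+ the ranking obtained by Katz centrality reduces to the degree ranking: for any two vertices v_i, v_j with deg(v_i) > deg(v_j), there exists ε > 0 such that for all α with 0 < α < ε one has [(I − αA)^{-1}𝟙]_i > [(I − αA)^{-1}𝟙]_j. -/
open Matrix

/-- As α → 0⁺ the Katz centrality ranking reduces to the degree ranking: if
deg(v_i) > deg(v_j) then for all sufficiently small α > 0 the Katz centrality of v_i
exceeds that of v_j. -/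
theorem stmt6 {N : ℕ} (G : SimpleGraph (Fin N)) [DecidableRel G.Adj]
    (hE : G.edgeSet.Nonempty) (i j : Fin N) (h : G.degree j < G.degree i) :
    ∃ ε > 0, ∀ α : ℝ, 0 < α → α < ε →
      ((1 - α • G.adjMatrix ℝ)⁻¹ *ᵥ (fun _ => 1)) j <
      ((1 - α • G.adjMatrix ℝ)⁻¹ *ᵥ (fun _ => 1)) i := by
  set A : Matrix (Fin N) (Fin N) ℝ := G.adjMatrix ℝ with hA
  set M : ℝ → Matrix (Fin N) (Fin N) ℝ := fun α => 1 - α • A with hM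
  have hMc : Continuous M := continuous_const.sub (continuous_id.smul continuous_const)
  have hM0 : M 0 = 1 := by simp [hM]
  have hinvc : ContinuousAt Inv.inv (M 0) := by
    apply continuousAt_matrix_inv
    rw [hM0, det_one]
    have : (Ring.inverse : ℝ → ℝ) = Inv.inv := funext Ring.inverse_eq_inv
    rw [this]
    exact continuousAt_inv₀ one_ne_zero
  set g : ℝ → ℝ := fun α =>
    (A *ᵥ ((M α)⁻¹ *ᵥ fun _ => 1)) i - (A *ᵥ ((M α)⁻¹ *ᵥ fun _ => 1)) j with hg
  have hinv : ContinuousAt (fun α => (M α)⁻¹) 0 := hinvc.comp hMc.continuousAt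
  have h2 : Continuous (fun B : Matrix (Fin N) (Fin N) ℝ => A *ᵥ (B *ᵥ fun _ => 1)) :=
    Continuous.matrix_mulVec continuous_const
      (Continuous.matrix_mulVec continuous_id continuous_const)
  have h1 : ContinuousAt (fun α => A *ᵥ ((M α)⁻¹ *ᵥ fun _ => 1)) 0 :=
    h2.continuousAt.comp hinv
  have hgc : ContinuousAt g 0 :=
    ((continuous_apply i).continuousAt.comp h1).sub
      ((continuous_apply j).continuousAt.comp h1)
  have hg0 : 0 < g 0 := by
    have hgv : g 0 = (G.degree i : ℝ) - (G.degree j : ℝ) := by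
      simp [hg, hM0, hA]
    rw [hgv]
    have := (Nat.cast_lt (α := ℝ)).2 h
    linarith
  -- continuity of det along M
  have hdetc : ContinuousAt (fun α => (M α).det) 0 :=
    Continuous.continuousAt (Continuous.matrix_det hMc)
  have hdet0 : (M 0).det ≠ 0 := by rw [hM0, det_one]; exact one_ne_zero
  have hev : ∀ᶠ α in nhds (0:ℝ), 0 < g α ∧ (M α).det ≠ 0 :=
    ((continuousAt_const.eventually_lt hgc hg0).and (hdetc.eventually_ne hdet0))
  obtain ⟨ε, hε, hball⟩ := Metric.eventually_nhds_iff.mp hev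
  refine ⟨ε, hε, fun α hα hαε => ?_⟩
  have hd : dist α (0:ℝ) < ε := by
    rw [Real.dist_eq, sub_zero, abs_of_pos hα]; exact hαε
  obtain ⟨hgα, hdα⟩ := hball hd
  set B := (M α)⁻¹ with hB
  have hmul : M α * B = 1 := mul_nonsing_inv _ (isUnit_iff_ne_zero.mpr hdα)
  have hident : B = 1 + α • (A * B) := by
    have : B - α • (A * B) = 1 := by
      calc B - α • (A * B) = (1 - α • A) * B := by
            rw [sub_mul, one_mul, smul_mul_assoc]
        _ = 1 := hmul
    linear_combination (norm := module) this
  have hvec : B *ᵥ (fun _ => 1) = (fun _ => 1) + α • (A *ᵥ (B *ᵥ fun _ => 1)) := by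
    conv_lhs => rw [hident]
    rw [add_mulVec, one_mulVec, smul_mulVec, mulVec_mulVec]
  have hi := congrFun hvec i
  have hj := congrFun hvec j
  simp only [Pi.add_apply, Pi.smul_apply, smul_eq_mul] at hi hj
  show (B *ᵥ fun _ => 1) j < (B *ᵥ fun _ => 1) i
  rw [hi, hj]
  have : 0 < α * g α := mul_pos hα hgα
  simp only [hg] at this ⊢
  nlinarith [this]
end

section
/- Let G be a connected finite simple undirected graph with adjacency matrix A, spectral radius ρ(A) = λ_1, and Perron eigenvector p_1 (the entrywise positive unit eigenvector associated with λ_1). As α → 1/ρ(A) from below, the Katz centrality ranking tends to the eigenvector centrality ranking: for any two vertices v_i, v_j with p_1(i) > p_1(j), there exists ε > 0 such that for all α with 1/ρ(A) − ε < α < 1/ρ(A) one has [(I − αA)^{-1}𝟙]_i > [(I − αA)^{-1}𝟙]_j. -/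
open Matrix

section Aux

variable {N : ℕ}

/-- symmetric dot product swap -/
lemma symm_dot_mulVec {A : Matrix (Fin N) (Fin N) ℝ} (hs : A.IsSymm)
    (u v : Fin N → ℝ) : u ⬝ᵥ (A *ᵥ v) = (A *ᵥ u) ⬝ᵥ v := by
  rw [Matrix.dotProduct_mulVec, ← Matrix.vecMul_transpose, hs.eq]

/-- if M has a nonzero kernel vector it is not a unit -/
lemma not_isUnit_of_mulVec_eq_zero {M : Matrix (Fin N) (Fin N) ℝ} {u : Fin N → ℝ}
    (hu : M *ᵥ u = 0) (hune : u ≠ 0) : ¬ IsUnit M := by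
  intro h
  rw [Matrix.isUnit_iff_isUnit_det] at h
  apply hune
  have h2 : M⁻¹ *ᵥ (M *ᵥ u) = u := by
    rw [Matrix.mulVec_mulVec, Matrix.nonsing_inv_mul _ h, Matrix.one_mulVec]
  rw [hu, Matrix.mulVec_zero] at h2
  exact h2.symm

/-- Perron eigenvalue is simple: every ρ-eigenvector is a multiple of p₁ -/
lemma perron_unique (G : SimpleGraph (Fin N)) [DecidableRel G.Adj]
    (hconn : G.Connected) (ρ : ℝ) (p₁ : Fin N → ℝ)
    (heig : G.adjMatrix ℝ *ᵥ p₁ = ρ • p₁) (hpos : ∀ t, 0 < p₁ t)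
    (u : Fin N → ℝ) (hu : G.adjMatrix ℝ *ᵥ u = ρ • u) : ∃ t : ℝ, u = t • p₁ := by
  have hne : Nonempty (Fin N) := hconn.nonempty
  obtain ⟨k₀, -, hk₀⟩ := Finset.exists_min_image Finset.univ
    (fun k => u k / p₁ k) ⟨Classical.arbitrary _, Finset.mem_univ _⟩
  set t := u k₀ / p₁ k₀ with ht
  set w : Fin N → ℝ := fun m => u m - t * p₁ m with hw
  have hwnn : ∀ m, 0 ≤ w m := by
    intro m
    have h1 : t ≤ u m / p₁ m := hk₀ m (Finset.mem_univ m)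
    have hp := hpos m
    rw [le_div_iff₀ hp] at h1
    simp only [hw]
    linarith
  have hweig : G.adjMatrix ℝ *ᵥ w = ρ • w := by
    have : (w : Fin N → ℝ) = u - t • p₁ := by funext m; simp only [hw, Pi.sub_apply, Pi.smul_apply, smul_eq_mul]
    rw [this, Matrix.mulVec_sub, Matrix.mulVec_smul, heig, hu]
    funext m; simp; ring
  have hwk₀ : w k₀ = 0 := by
    have hp := (hpos k₀).ne'
    simp only [hw, ht]
    field_simp
    ring
  have key : ∀ a, w a = 0 → ∀ c, G.Adj a c → w c = 0 := by
    intro a ha c hac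
    have h1 : (G.adjMatrix ℝ *ᵥ w) a = ρ * w a := by rw [hweig]; rfl
    rw [SimpleGraph.adjMatrix_mulVec_apply, ha, mul_zero] at h1
    have h2 := (Finset.sum_eq_zero_iff_of_nonneg
      (fun m _ => hwnn m)).mp h1
    exact h2 c ((SimpleGraph.mem_neighborFinset G a c).mpr hac)
  have hwalk : ∀ (a c : Fin N) (_ : G.Walk a c), w a = 0 → w c = 0 := by
    intro a c pw
    induction pw with
    | nil => exact id
    | cons h _ ih => intro ha; exact ih (key _ ha _ h)
  have hall : ∀ m, w m = 0 := fun m =>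
    ((hconn.preconnected k₀ m).elim (fun pw => hwalk _ _ pw hwk₀))
  refine ⟨t, funext fun m => ?_⟩
  have := hall m
  simp only [hw] at this
  simp only [Pi.smul_apply, smul_eq_mul]
  linarith

end Aux

set_option maxHeartbeats 1000000 in
/-- As α → 1/ρ(A)⁻ the Katz centrality ranking tends to the eigenvector centrality
ranking: for a connected graph with Perron eigenvector p₁ (entrywise positive unit
eigenvector for the spectral radius ρ), if p₁(i) > p₁(j) then for all α close enough
to 1/ρ from below, KC(v_i) > KC(v_j). -/
theorem stmt7 {N : ℕ} (hN : 2 ≤ N) (G : SimpleGraph (Fin N)) [DecidableRel G.Adj]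
    (hconn : G.Connected)
    (ρ : ℝ) (p₁ : Fin N → ℝ)
    (heig : G.adjMatrix ℝ *ᵥ p₁ = ρ • p₁)
    (hpos : ∀ t, 0 < p₁ t)
    (hnorm : ∑ t, p₁ t ^ 2 = 1)
    (hρpos : 0 < ρ)
    (hρmax : ∀ μ ∈ spectrum ℝ (G.adjMatrix ℝ), |μ| ≤ ρ)
    (i j : Fin N) (hij : p₁ j < p₁ i) :
    ∃ ε > 0, ∀ α : ℝ, 1 / ρ - ε < α → α < 1 / ρ →
      ((1 - α • G.adjMatrix ℝ)⁻¹ *ᵥ (fun _ => 1)) j <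
      ((1 - α • G.adjMatrix ℝ)⁻¹ *ᵥ (fun _ => 1)) i := by
  classical
  set A := G.adjMatrix ℝ with hAdef
  have hsymm : A.IsSymm := G.isSymm_adjMatrix
  have hA : A.IsHermitian := by
    show Aᴴ = A
    ext m n
    rw [Matrix.conjTranspose_apply, star_trivial]
    exact (congrFun (congrFun hsymm n) m : Aᵀ n m = A n m) ▸ rfl
  obtain ⟨b, hb⟩ : ∃ b : OrthonormalBasis (Fin N) ℝ (EuclideanSpace ℝ (Fin N)),
      b = hA.eigenvectorBasis := ⟨_, rfl⟩
  obtain ⟨μ, hμval⟩ : ∃ μ : Fin N → ℝ, μ = hA.eigenvalues := ⟨_, rfl⟩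
  have heigk : ∀ k, A *ᵥ (fun m => b k m) = μ k • (fun m => b k m) := by
    intro k; rw [hb, hμval]; exact hA.mulVec_eigenvectorBasis k
  have habs : ∀ k, |μ k| ≤ ρ := by
    intro k; rw [hμval]
    exact hρmax _ (hA.eigenvalues_mem_spectrum_real k)
  -- expansion of arbitrary vector in the eigenbasis, componentwise
  have hrepr : ∀ (x : EuclideanSpace ℝ (Fin N)) (m : Fin N),
      ∑ k, (∑ n, b k n * x n) * b k m = x m := by
    intro x m
    have h1 := congrArg (EuclideanSpace.proj (𝕜 := ℝ) m) (b.sum_repr x)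
    rw [map_sum] at h1
    calc ∑ k, (∑ n, b k n * x n) * b k m
        = ∑ k, (EuclideanSpace.proj (𝕜 := ℝ) m) (b.repr x k • b k) := by
          apply Finset.sum_congr rfl
          intro k _
          rw [_root_.map_smul, b.repr_apply_apply]
          have hinner : (inner ℝ (b k) x : ℝ) = ∑ n, b k n * x n := by
            rw [PiLp.inner_apply]
            apply Finset.sum_congr rfl
            intro n _
            rw [RCLike.inner_apply]
            simp [mul_comm]
          rw [hinner]
          rfl
      _ = (EuclideanSpace.proj (𝕜 := ℝ) m) x := h1
      _ = x m := rfl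
  set c : Fin N → ℝ := fun k => ∑ n, b k n with hc
  set tk : Fin N → ℝ := fun k => ∑ n, b k n * p₁ n with htk
  have honerepr : ∀ m, ∑ k, c k * b k m = 1 := by
    intro m
    have := hrepr (WithLp.toLp 2 (fun _ => (1:ℝ))) m
    simpa [hc] using this
  have hprepr : ∀ m, ∑ k, tk k * b k m = p₁ m := by
    intro m
    have := hrepr (WithLp.toLp 2 p₁) m
    simpa [htk] using this
  -- simplicity applied to each eigenvector with eigenvalue ρ
  have hspan : ∀ k, μ k = ρ → (fun m => b k m) = tk k • p₁ := by
    intro k hk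
    obtain ⟨t', ht'⟩ := perron_unique G hconn ρ p₁ heig hpos (fun m => b k m)
      (by rw [heigk k, hk])
    have hbk : ∀ n, b k n = t' * p₁ n := by
      intro n; have := congrFun ht' n; simpa using this
    have htt : tk k = t' := by
      simp only [htk]
      calc ∑ n, b k n * p₁ n = ∑ n, t' * p₁ n ^ 2 := by
            apply Finset.sum_congr rfl; intro n _; rw [hbk n]; ring
        _ = t' * ∑ n, p₁ n ^ 2 := by rw [Finset.mul_sum]
        _ = t' := by rw [hnorm, mul_one]
    rw [htt]; exact ht'
  -- there is an eigenvalue equal to ρ with nonzero coefficient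
  have hex : ∃ k, μ k = ρ ∧ tk k ≠ 0 := by
    by_contra hcon
    push_neg at hcon
    have h0 : ∃ k, tk k ≠ 0 := by
      by_contra hall; push_neg at hall
      have h1 := hprepr i
      rw [Finset.sum_eq_zero (fun k _ => by rw [hall k, zero_mul])] at h1
      exact (hpos i).ne h1
    obtain ⟨k, hk⟩ := h0
    have h2 : (fun m => b k m) ⬝ᵥ (A *ᵥ p₁) = (A *ᵥ fun m => b k m) ⬝ᵥ p₁ :=
      symm_dot_mulVec hsymm _ _
    rw [heig, heigk] at h2
    have h3 : ρ * tk k = μ k * tk k := by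
      calc ρ * tk k = ∑ n, b k n * (ρ * p₁ n) := by
            rw [htk]; simp only [Finset.mul_sum]; apply Finset.sum_congr rfl; intro n _; ring
        _ = (fun m => b k m) ⬝ᵥ (ρ • p₁) := by
            simp [dotProduct]
        _ = (μ k • fun m => b k m) ⬝ᵥ p₁ := h2
        _ = ∑ n, μ k * b k n * p₁ n := by simp [dotProduct]
        _ = μ k * tk k := by rw [htk, Finset.mul_sum]; apply Finset.sum_congr rfl; intro n _; ring
    have h4 : μ k = ρ := (mul_right_cancel₀ hk h3).symm
    exact hk (hcon k h4)
  have hd : 0 < p₁ i - p₁ j := sub_pos.mpr hij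
  have hs : 0 < ∑ m, p₁ m :=
    Finset.sum_pos (fun m _ => hpos m) ⟨i, Finset.mem_univ i⟩
  set S := Finset.univ.filter (fun k => μ k = ρ) with hS
  set Cval := (∑ k ∈ S, (tk k)^2) * ((∑ m, p₁ m) * (p₁ i - p₁ j)) with hCval
  have hCpos : 0 < Cval := by
    apply mul_pos _ (mul_pos hs hd)
    apply Finset.sum_pos' (fun k _ => sq_nonneg _)
    obtain ⟨k, hk1, hk2⟩ := hex
    exact ⟨k, Finset.mem_filter.mpr ⟨Finset.mem_univ k, hk1⟩, by positivity⟩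
  set mk : Fin N → ℝ := fun k => min 1 (1 - μ k / ρ) with hmkdef
  have hmkpos : ∀ k, μ k ≠ ρ → 0 < mk k := by
    intro k hk
    have h1 : μ k < ρ := lt_of_le_of_ne ((abs_le.mp (habs k)).2) hk
    simp only [hmkdef]
    apply lt_min one_pos
    rw [sub_pos, div_lt_one hρpos]
    exact h1
  set Bval := ∑ k ∈ Finset.univ.filter (fun k => ¬ μ k = ρ),
      |c k * (b k i - b k j)| / mk k with hBval
  have hBnn : 0 ≤ Bval := by
    apply Finset.sum_nonneg
    intro k hk
    exact div_nonneg (abs_nonneg _) (hmkpos k (Finset.mem_filter.mp hk).2).le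
  have h2ρ : (0:ℝ) < 1/(2*ρ) := by positivity
  have hCB : (0:ℝ) < Cval/((Bval+1)*ρ) := by positivity
  refine ⟨min (1/(2*ρ)) (Cval/((Bval+1)*ρ)), lt_min h2ρ hCB, ?_⟩
  intro α hα1 hα2
  have hhalf : 1/ρ - 1/(2*ρ) = 1/(2*ρ) := by field_simp; ring
  have hα0 : 0 < α := by
    have h1 := min_le_left (1/(2*ρ)) (Cval/((Bval+1)*ρ))
    linarith
  have hαρ : 0 < 1 - α * ρ := by
    have h1 : α * ρ < (1/ρ) * ρ := mul_lt_mul_of_pos_right hα2 hρpos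
    have h2 : (1/ρ) * ρ = 1 := by field_simp
    linarith
  have hgap : 1 - α*ρ < Cval/(Bval+1) := by
    have h1 : 1/ρ - α < Cval/((Bval+1)*ρ) :=
      lt_of_lt_of_le (by linarith [min_le_right (1/(2*ρ)) (Cval/((Bval+1)*ρ))]) (le_refl _)
    have h2 : ρ * (1/ρ - α) = 1 - α*ρ := by field_simp
    have h3 : ρ * (Cval/((Bval+1)*ρ)) = Cval/(Bval+1) := by
      rw [mul_comm (Bval+1) ρ, ← div_div]
      field_simp
    nlinarith [mul_lt_mul_of_pos_left h1 hρpos]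
  have hα2' : α ≤ ρ⁻¹ := by rw [← one_div]; exact hα2.le
  have hpos1 : ∀ k, 0 < 1 - α * μ k := by
    intro k
    rcases le_or_gt (μ k) 0 with h|h
    · nlinarith
    · have hle : μ k ≤ ρ := (abs_le.mp (habs k)).2
      have h1 : α * μ k ≤ ρ⁻¹ * μ k := mul_le_mul_of_nonneg_right hα2' h.le
      have h2 : ρ⁻¹ * μ k ≤ ρ⁻¹ * ρ := mul_le_mul_of_nonneg_left hle (inv_nonneg.mpr hρpos.le)
      rw [inv_mul_cancel₀ hρpos.ne'] at h2
      -- α * μ k < 1 : strict since α < ρ⁻¹ and μ k > 0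
      have h1' : α * μ k < ρ⁻¹ * μ k := mul_lt_mul_of_pos_right (by rw [← one_div]; exact hα2) h
      linarith
  set M : Matrix (Fin N) (Fin N) ℝ := 1 - α • A with hM
  have hdet : IsUnit M.det := by
    by_contra hcon
    have hαne : α ≠ 0 := hα0.ne'
    have hMeq : M = α • (α⁻¹ • (1 : Matrix (Fin N) (Fin N) ℝ) - A) := by
      rw [smul_sub, smul_smul, mul_inv_cancel₀ hαne, one_smul]
    have hdet2 : M.det = α ^ N * (α⁻¹ • (1 : Matrix (Fin N) (Fin N) ℝ) - A).det := by
      rw [hMeq, Matrix.det_smul, Fintype.card_fin]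
    have h0 : (α⁻¹ • (1 : Matrix (Fin N) (Fin N) ℝ) - A).det = 0 := by
      by_contra h
      exact hcon (by rw [hdet2]
                     exact isUnit_iff_ne_zero.mpr (mul_ne_zero (pow_ne_zero _ hαne) h))
    have hmem : α⁻¹ ∈ spectrum ℝ A := by
      rw [spectrum.mem_iff, Algebra.algebraMap_eq_smul_one, Matrix.isUnit_iff_isUnit_det, h0]
      simp
    have hub := hρmax _ hmem
    have hρα : ρ < α⁻¹ := by
      rw [← one_div, lt_div_iff₀ hα0]
      nlinarith
    have habs2 : |α⁻¹| = α⁻¹ := abs_of_pos (inv_pos.mpr hα0)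
    linarith [hub, habs2.symm.le]
  set x : Fin N → ℝ := fun m => ∑ k, (c k / (1 - α * μ k)) * b k m with hx
  have hMx : M *ᵥ x = (fun _ => 1 : Fin N → ℝ) := by
    have hxs : x = ∑ k, (c k / (1 - α * μ k)) • (fun m => b k m) := by
      funext m; rw [Finset.sum_apply]; simp [hx]
    have hAx : A *ᵥ x = ∑ k, (c k / (1 - α * μ k)) • (μ k • (fun m => b k m)) := by
      rw [hxs, ← Matrix.mulVecLin_apply, map_sum]
      apply Finset.sum_congr rfl
      intro k _
      rw [_root_.map_smul, Matrix.mulVecLin_apply, heigk]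
    funext m
    rw [hM, Matrix.sub_mulVec, Matrix.one_mulVec, Matrix.smul_mulVec]
    have h1 : (A *ᵥ x) m = ∑ k, (c k / (1 - α * μ k)) * (μ k * b k m) := by
      rw [hAx, Finset.sum_apply]
      apply Finset.sum_congr rfl
      intro k _
      simp
    have h2 : x m = ∑ k, (c k / (1 - α * μ k)) * b k m := rfl
    show x m - (α • (A *ᵥ x)) m = 1
    rw [Pi.smul_apply, smul_eq_mul, h1, h2, Finset.mul_sum, ← Finset.sum_sub_distrib]
    conv_rhs => rw [← honerepr m]
    apply Finset.sum_congr rfl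
    intro k _
    have hne := (hpos1 k).ne'
    field_simp
  have hKC : (M⁻¹ *ᵥ (fun _ => 1 : Fin N → ℝ)) = x := by
    rw [← hMx, Matrix.mulVec_mulVec, Matrix.nonsing_inv_mul _ hdet, Matrix.one_mulVec]
  rw [hKC, ← sub_pos]
  have hdiff : x i - x j = ∑ k, (c k / (1 - α * μ k)) * (b k i - b k j) := by
    simp only [hx]
    rw [← Finset.sum_sub_distrib]
    apply Finset.sum_congr rfl
    intro k _
    ring
  rw [hdiff, ← Finset.sum_filter_add_sum_filter_not Finset.univ (fun k => μ k = ρ)]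
  have hsumS : ∑ k ∈ Finset.univ.filter (fun k => μ k = ρ),
      (c k / (1 - α * μ k)) * (b k i - b k j) = Cval / (1 - α * ρ) := by
    rw [hCval, ← hS, Finset.sum_mul, Finset.sum_div]
    apply Finset.sum_congr rfl
    intro k hk
    have hkρ : μ k = ρ := (Finset.mem_filter.mp hk).2
    have hbk : ∀ n, b k n = tk k * p₁ n := by
      intro n; have := congrFun (hspan k hkρ) n; simpa using this
    have hck : c k = tk k * (∑ m, p₁ m) := by
      simp only [hc, Finset.mul_sum]
      apply Finset.sum_congr rfl
      intro n _
      exact hbk n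
    rw [hkρ, hck, hbk i, hbk j]
    ring
  rw [hsumS]
  have hrest : -Bval ≤ ∑ k ∈ Finset.univ.filter (fun k => ¬ μ k = ρ),
      (c k / (1 - α * μ k)) * (b k i - b k j) := by
    rw [hBval, ← Finset.sum_neg_distrib]
    apply Finset.sum_le_sum
    intro k hk
    have hkρ : μ k ≠ ρ := (Finset.mem_filter.mp hk).2
    have hmk := hmkpos k hkρ
    have hden := hpos1 k
    have hge : mk k ≤ 1 - α * μ k := by
      rcases le_or_gt (μ k) 0 with h|h
      · calc mk k ≤ 1 := min_le_left _ _
          _ ≤ 1 - α * μ k := by nlinarith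
      · calc mk k ≤ 1 - μ k / ρ := min_le_right _ _
          _ ≤ 1 - α * μ k := by
            have h1 : α * μ k ≤ ρ⁻¹ * μ k := mul_le_mul_of_nonneg_right hα2' h.le
            have h2 : μ k / ρ = ρ⁻¹ * μ k := by rw [div_eq_inv_mul]
            linarith
    set X := c k * (b k i - b k j) with hX
    have hXeq : (c k / (1 - α * μ k)) * (b k i - b k j) = X / (1 - α * μ k) := by
      rw [hX]; ring
    rw [hXeq]
    have h2 : |X| / (1 - α * μ k) ≤ |X| / mk k :=
      div_le_div_of_nonneg_left (abs_nonneg _) hmk hge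
    have h3 : -|X| ≤ X := neg_abs_le _
    have h4 : (-|X|) / (1 - α * μ k) ≤ X / (1 - α * μ k) := by gcongr
    have h5 : (-|X|) / (1 - α * μ k) = -(|X| / (1 - α * μ k)) := neg_div _ _
    have h6 : (-|X|) / mk k = -(|X| / mk k) := neg_div _ _
    linarith
  have hCB2 : Bval + 1 < Cval / (1 - α * ρ) := by
    rw [lt_div_iff₀ hαρ]
    have h1 : (0:ℝ) < Bval + 1 := by linarith
    have h2 := mul_lt_mul_of_pos_left hgap h1
    have h3 : (Bval + 1) * (Cval / (Bval + 1)) = Cval := by field_simp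
    linarith
  linarith
end

section
/- Let G be a finite simple undirected graph with adjacency matrix A. For β → 0+ the ranking obtained by subgraph centrality reduces to the degree ranking: for any two vertices v_i, v_j with deg(v_i) > deg(v_j), there exists ε > 0 such that for all β with 0 < β < ε one has [e^{βA}]_{ii} > [e^{βA}]_{jj}. -/
open Matrix

section aux

variable {N : ℕ} (G : SimpleGraph (Fin N)) [DecidableRel G.Adj]

private lemma adjPow_nonneg (n : ℕ) (a b : Fin N) :
    0 ≤ (G.adjMatrix ℝ ^ n) a b := by
  induction n generalizing a b with
  | zero => simp [Matrix.one_apply]; split <;> norm_num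
  | succ n ih =>
    rw [pow_succ, Matrix.mul_apply]
    refine Finset.sum_nonneg fun c _ => mul_nonneg (ih a c) ?_
    simp only [SimpleGraph.adjMatrix_apply]
    split <;> norm_num

private lemma adjPow_le (n : ℕ) (a b : Fin N) :
    (G.adjMatrix ℝ ^ n) a b ≤ ((N : ℝ) + 1) ^ n := by
  induction n generalizing a b with
  | zero => simp [Matrix.one_apply]; split <;> norm_num
  | succ n ih =>
    rw [pow_succ, Matrix.mul_apply]
    have hc : (0:ℝ) ≤ (N : ℝ) + 1 := by positivity
    calc ∑ c, (G.adjMatrix ℝ ^ n) a c * (G.adjMatrix ℝ) c b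
        ≤ ∑ _c : Fin N, ((N : ℝ) + 1) ^ n * 1 := by
          refine Finset.sum_le_sum fun c _ => ?_
          refine mul_le_mul (ih a c) ?_ ?_ (by positivity)
          · simp only [SimpleGraph.adjMatrix_apply]; split <;> norm_num
          · exact adjPow_nonneg G 1 c b |>.trans_eq (by rw [pow_one])
      _ = (N : ℝ) * ((N : ℝ) + 1) ^ n := by simp [mul_comm]
      _ ≤ ((N : ℝ) + 1) ^ (n + 1) := by
          rw [pow_succ, mul_comm (((N:ℝ)+1)^n)]
          exact mul_le_mul_of_nonneg_right (by linarith) (by positivity)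

private lemma entry_summable (β : ℝ) (a b : Fin N) :
    Summable (fun n : ℕ => ((n.factorial : ℝ))⁻¹ * β ^ n * ((G.adjMatrix ℝ ^ n) a b)) := by
  have h := Real.summable_pow_div_factorial (|β| * ((N : ℝ) + 1))
  refine h.of_norm_bounded fun n => ?_
  rw [Real.norm_eq_abs, abs_mul, abs_mul, mul_pow, mul_div_assoc, abs_of_nonneg
    (adjPow_nonneg G n a b)]
  rw [abs_inv, Nat.abs_cast, abs_pow]
  have h1 : (G.adjMatrix ℝ ^ n) a b ≤ ((N : ℝ) + 1) ^ n := adjPow_le G n a b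
  have h2 : (0:ℝ) < (n.factorial : ℝ) := by exact_mod_cast n.factorial_pos
  rw [mul_comm (((n.factorial : ℝ))⁻¹), mul_assoc, div_eq_mul_inv, mul_comm (((N:ℝ)+1)^n)]
  refine mul_le_mul_of_nonneg_left ?_ (by positivity)
  exact mul_le_mul_of_nonneg_left h1 (by positivity)

private lemma exp_entry (β : ℝ) (a b : Fin N) :
    (NormedSpace.exp (β • G.adjMatrix ℝ)) a b
      = ∑' n : ℕ, ((n.factorial : ℝ))⁻¹ * β ^ n * ((G.adjMatrix ℝ ^ n) a b) := by
  have key : ∀ (n : ℕ) (a b : Fin N),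
      (((n.factorial : ℝ))⁻¹ • (β • G.adjMatrix ℝ) ^ n) a b
        = ((n.factorial : ℝ))⁻¹ * β ^ n * ((G.adjMatrix ℝ ^ n) a b) := by
    intro n a b
    rw [smul_pow]
    simp [Matrix.smul_apply, mul_assoc]
  have hsum : Summable (fun n : ℕ => ((n.factorial : ℝ))⁻¹ • (β • G.adjMatrix ℝ) ^ n) := by
    erw [Pi.summable]; intro a'
    rw [Pi.summable]; intro b'
    simpa only [key] using entry_summable G β a' b'
  have hsum' : Summable (fun n : ℕ =>
      (((n.factorial : ℝ))⁻¹ • (β • G.adjMatrix ℝ) ^ n) a) := by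
    rw [Pi.summable]; intro b'
    simpa only [key] using entry_summable G β a b'
  rw [NormedSpace.exp_eq_tsum ℝ]
  beta_reduce
  erw [tsum_apply hsum, tsum_apply hsum']
  exact tsum_congr fun n => key n a b

end aux

set_option maxHeartbeats 1000000 in
/-- As β → 0⁺ the subgraph centrality ranking reduces to the degree ranking: if
deg(v_i) > deg(v_j) then for all sufficiently small β > 0 one has
[e^{βA}]_{ii} > [e^{βA}]_{jj}. -/
theorem stmt10 {N : ℕ} (G : SimpleGraph (Fin N)) [DecidableRel G.Adj]
    (i j : Fin N) (h : G.degree j < G.degree i) :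
    ∃ ε > 0, ∀ β : ℝ, 0 < β → β < ε →
      (NormedSpace.exp (β • G.adjMatrix ℝ)) j j <
      (NormedSpace.exp (β • G.adjMatrix ℝ)) i i := by
  set A := G.adjMatrix ℝ with hA
  set c : ℝ := (N : ℝ) + 1 with hc
  clear_value c
  have hc1 : (1:ℝ) ≤ c := by rw [hc]; exact le_add_of_nonneg_left (Nat.cast_nonneg N)
  have hc0 : (0:ℝ) < c := lt_of_lt_of_le one_pos hc1
  refine ⟨1 / (4 * c ^ 3), by positivity, fun β hβ hβε => ?_⟩
  -- basic bounds on β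
  have hβc3 : β * c ^ 3 < 1 / 4 := by
    have := (lt_div_iff₀ (by positivity : (0:ℝ) < 4 * c ^ 3)).mp hβε
    nlinarith [pow_pos hc0 3]
  have hβc : β * c < 1 / 4 := by
    have h2 : (1:ℝ) ≤ c ^ 2 := one_le_pow₀ hc1
    have h3 : β * c * 1 ≤ β * c * c ^ 2 :=
      mul_le_mul_of_nonneg_left h2 (by positivity)
    calc β * c = β * c * 1 := by ring
      _ ≤ β * c * c ^ 2 := h3
      _ = β * c ^ 3 := by ring
      _ < 1 / 4 := hβc3
  have hβc0 : 0 ≤ β * c := le_of_lt (mul_pos hβ hc0)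
  have hβclt1 : β * c < 1 := lt_trans hβc (by norm_num)
  -- the difference series
  set t : ℕ → ℝ := fun n =>
    ((n.factorial : ℝ))⁻¹ * β ^ n * ((A ^ n) i i - (A ^ n) j j) with ht
  have hti : Summable (fun n : ℕ => ((n.factorial : ℝ))⁻¹ * β ^ n * ((A ^ n) i i)) :=
    entry_summable G β i i
  have htj : Summable (fun n : ℕ => ((n.factorial : ℝ))⁻¹ * β ^ n * ((A ^ n) j j)) :=
    entry_summable G β j j
  have htsum : Summable t := by
    have := hti.sub htj
    refine this.congr fun n => ?_
    simp [ht, mul_sub]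
  have hdiff : (NormedSpace.exp (β • A)) i i - (NormedSpace.exp (β • A)) j j
      = ∑' n, t n := by
    rw [exp_entry, exp_entry, ← Summable.tsum_sub hti htj]
    refine tsum_congr fun n => ?_
    simp [ht, mul_sub]
  -- split off first three terms
  have hsplit : ∑' n, t n = (∑ n ∈ Finset.range 3, t n) + ∑' n, t (n + 3) :=
    (Summable.sum_add_tsum_nat_add 3 htsum).symm
  -- first three terms
  have hA0 : (A ^ 0) i i - (A ^ 0) j j = 0 := by simp [Matrix.one_apply]
  have hA1 : (A ^ 1) i i - (A ^ 1) j j = 0 := by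
    simp [pow_one, hA, SimpleGraph.adjMatrix_apply]
  have hA2 : (A ^ 2) i i - (A ^ 2) j j = (G.degree i : ℝ) - (G.degree j : ℝ) := by
    rw [pow_two, hA, SimpleGraph.adjMatrix_mul_self_apply_self,
      SimpleGraph.adjMatrix_mul_self_apply_self]
  have hdeg : (1:ℝ) ≤ (G.degree i : ℝ) - (G.degree j : ℝ) := by
    have : (G.degree j : ℝ) + 1 ≤ (G.degree i : ℝ) := by exact_mod_cast h
    linarith
  have hfirst : (∑ n ∈ Finset.range 3, t n) ≥ β ^ 2 / 2 := by
    rw [Finset.sum_range_succ, Finset.sum_range_succ, Finset.sum_range_one]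
    have e0 : t 0 = 0 := by simp only [ht]; rw [hA0, mul_zero]
    have e1 : t 1 = 0 := by simp only [ht]; rw [hA1, mul_zero]
    have e2 : t 2 = (2:ℝ)⁻¹ * β ^ 2 * ((G.degree i : ℝ) - (G.degree j : ℝ)) := by
      simp only [ht]; rw [hA2]; norm_num [Nat.factorial]
    rw [e0, e1, e2]
    nlinarith [sq_nonneg β, pow_pos hβ 2]
  -- tail bound
  have hterm : ∀ n : ℕ, |t (n + 3)| ≤ (β * c) ^ (n + 3) := by
    intro n
    have hfac : (1:ℝ) ≤ ((n + 3).factorial : ℝ) := by exact_mod_cast (n+3).factorial_pos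
    have hd : |(A ^ (n+3)) i i - (A ^ (n+3)) j j| ≤ c ^ (n + 3) := by
      have hui := adjPow_le G (n+3) i i
      have huj := adjPow_le G (n+3) j j
      have hli := adjPow_nonneg G (n+3) i i
      have hlj := adjPow_nonneg G (n+3) j j
      rw [← hA] at hui huj hli hlj
      rw [← hc] at hui huj
      rw [abs_sub_le_iff]
      exact ⟨by linarith, by linarith⟩
    rw [ht]
    simp only []
    rw [abs_mul, abs_mul, abs_inv, Nat.abs_cast, abs_pow, abs_of_pos hβ, mul_pow]
    calc (((n+3).factorial : ℝ))⁻¹ * β ^ (n+3) * |(A ^ (n+3)) i i - (A ^ (n+3)) j j|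
        ≤ 1 * β ^ (n+3) * c ^ (n+3) := by
          refine mul_le_mul (mul_le_mul_of_nonneg_right ?_ (by positivity)) hd
            (abs_nonneg _) (by positivity)
          rw [inv_le_one_iff₀]; right; exact hfac
      _ = β ^ (n+3) * c ^ (n+3) := by ring
  have hgeo : Summable (fun n : ℕ => (β * c) ^ (n + 3)) := by
    have := (summable_geometric_of_lt_one hβc0 hβclt1).mul_left ((β * c) ^ 3)
    refine this.congr fun n => ?_
    rw [pow_add, mul_comm]
  have htail' : Summable (fun n : ℕ => t (n + 3)) := (summable_nat_add_iff 3).2 htsum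
  have hgeosum : ∑' n : ℕ, (β * c) ^ (n + 3) = (β * c) ^ 3 * (1 - β * c)⁻¹ := by
    rw [show (fun n : ℕ => (β * c) ^ (n + 3)) = fun n : ℕ => (β * c) ^ 3 * (β * c) ^ n
      from funext fun n => by rw [pow_add, mul_comm]]
    rw [tsum_mul_left, tsum_geometric_of_lt_one hβc0 hβclt1]
  have hlow : -((β * c) ^ 3 * (1 - β * c)⁻¹) ≤ ∑' n, t (n + 3) := by
    have h1 : ∀ n : ℕ, -((β * c) ^ (n + 3)) ≤ t (n + 3) := by
      intro n
      have h2 := (abs_le.mp (le_of_eq (rfl : |t (n+3)| = |t (n+3)|))).1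
      have h3 := hterm n
      linarith
    calc -((β * c) ^ 3 * (1 - β * c)⁻¹) = ∑' n : ℕ, -((β * c) ^ (n + 3)) := by
          rw [tsum_neg, hgeosum]
      _ ≤ ∑' n, t (n + 3) := Summable.tsum_le_tsum h1 hgeo.neg htail'
  have hsmall : (β * c) ^ 3 * (1 - β * c)⁻¹ < β ^ 2 / 2 := by
    have h34 : (3:ℝ)/4 < 1 - β * c := by linarith
    have hineq : (β * c) ^ 3 * (1 - β * c)⁻¹ ≤ (β * c) ^ 3 * (4/3 : ℝ) := by
      refine mul_le_mul_of_nonneg_left ?_ (by positivity)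
      rw [inv_le_comm₀ (by linarith) (by norm_num)]
      linarith
    have hlt : (β * c) ^ 3 * (4/3 : ℝ) < β ^ 2 / 2 := by
      have h5 : (β * c) ^ 3 < β ^ 2 / 4 := by
        have h6 : β ^ 2 * (β * c ^ 3) < β ^ 2 * (1/4) :=
          mul_lt_mul_of_pos_left hβc3 (by positivity)
        nlinarith
      nlinarith [pow_nonneg hβc0 3]
    linarith
  -- conclude
  have hpos : 0 < (NormedSpace.exp (β • A)) i i - (NormedSpace.exp (β • A)) j j := by
    rw [hdiff, hsplit]
    have := hlow
    linarith [hfirst]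
  linarith
end

section
/- Let G be a connected finite simple undirected graph on N ≥ 2 vertices with adjacency matrix A and Perron eigenvector p_1 (the entrywise positive unit eigenvector associated with the largest eigenvalue λ_1). For β → ∞ the ranking obtained by subgraph centrality tends to the eigenvector centrality ranking: for any two vertices v_i, v_j with p_1(i) > p_1(j), there exists B > 0 such that for all β > B one has [e^{βA}]_{ii} > [e^{βA}]_{jj}. -/
open Matrix

lemma my_eig_unique {N : ℕ} (G : SimpleGraph (Fin N)) [DecidableRel G.Adj]
    (hconn : G.Connected) (hN : 0 < N) (lam : ℝ) (p₁ : Fin N → ℝ)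
    (heig : G.adjMatrix ℝ *ᵥ p₁ = lam • p₁)
    (hpos : ∀ t, 0 < p₁ t)
    (w : Fin N → ℝ) (hw : G.adjMatrix ℝ *ᵥ w = lam • w) :
    ∃ c : ℝ, w = c • p₁ := by
  classical
  haveI : Nonempty (Fin N) := ⟨⟨0, hN⟩⟩
  have hne : (Finset.univ : Finset (Fin N)).Nonempty := Finset.univ_nonempty
  set c : ℝ := Finset.univ.inf' hne (fun t => w t / p₁ t) with hc
  set u : Fin N → ℝ := fun t => w t - c * p₁ t with hu
  have hu_nonneg : ∀ t, 0 ≤ u t := by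
    intro t
    have h1 : c ≤ w t / p₁ t := Finset.inf'_le _ (Finset.mem_univ t)
    have h2 : c * p₁ t ≤ w t := (le_div_iff₀ (hpos t)).mp h1
    simp [hu]; linarith
  obtain ⟨t0, -, ht0⟩ := Finset.exists_mem_eq_inf' hne (fun t => w t / p₁ t)
  have hu0 : u t0 = 0 := by
    have hc0 : c = w t0 / p₁ t0 := ht0
    have hp : p₁ t0 ≠ 0 := (hpos t0).ne'
    simp only [hu, hc0]
    field_simp
    ring
  have hAu : G.adjMatrix ℝ *ᵥ u = lam • u := by
    have : u = w - c • p₁ := by funext t; simp [hu]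
    rw [this, Matrix.mulVec_sub, Matrix.mulVec_smul, hw, heig]
    funext t; simp; ring
  have hstep : ∀ t, u t = 0 → ∀ s, G.Adj t s → u s = 0 := by
    intro t ht s hs
    have h0 : (G.adjMatrix ℝ *ᵥ u) t = 0 := by rw [hAu]; simp [ht]
    rw [SimpleGraph.adjMatrix_mulVec_apply] at h0
    have := (Finset.sum_eq_zero_iff_of_nonneg (fun s _ => hu_nonneg s)).mp h0
    exact this s (by simpa [SimpleGraph.mem_neighborFinset] using hs)
  have key : ∀ (a b : Fin N) (p : G.Walk a b), u a = 0 → u b = 0 := by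
    intro a b p
    induction p with
    | nil => exact id
    | cons h q ih => intro ha; exact ih (hstep _ ha _ h)
  have hall : ∀ t, u t = 0 := by
    intro t
    obtain ⟨p⟩ := hconn t0 t
    exact key _ _ p hu0
  refine ⟨c, funext fun t => ?_⟩
  have h := hall t
  simp only [hu] at h
  simp only [Pi.smul_apply, smul_eq_mul]
  linarith

lemma my_exp_diag {N : ℕ} (A : Matrix (Fin N) (Fin N) ℝ) (hA : A.IsHermitian) (β : ℝ) (i : Fin N) :
    (NormedSpace.exp (β • A)) i i
      = ∑ k, Real.exp (β * hA.eigenvalues k) * (hA.eigenvectorBasis k i)^2 := by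
  classical
  set U : Matrix (Fin N) (Fin N) ℝ := (hA.eigenvectorUnitary : Matrix (Fin N) (Fin N) ℝ) with hU
  have h1 : U * star U = 1 := (Matrix.mem_unitaryGroup_iff).mp hA.eigenvectorUnitary.2
  have hUunit : IsUnit U := (Matrix.isUnit_iff_isUnit_det U).mpr (Matrix.isUnit_det_of_right_inverse h1)
  have hUinv : U⁻¹ = star U := Matrix.inv_eq_right_inv h1
  have hofReal : (RCLike.ofReal ∘ hA.eigenvalues : Fin N → ℝ) = hA.eigenvalues := by
    funext k; simp
  have hspec : A = U * Matrix.diagonal hA.eigenvalues * star U := by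
    have := hA.spectral_theorem
    rwa [hofReal] at this
  have hsmul : β • A = U * Matrix.diagonal (fun k => β * hA.eigenvalues k) * star U := by
    conv_lhs => rw [hspec]
    rw [← Matrix.smul_mul, ← Matrix.mul_smul]
    congr 2
    ext a b
    by_cases h : a = b <;> simp [Matrix.diagonal_apply, h]
  rw [hsmul, ← hUinv, Matrix.exp_conj U _ hUunit, Matrix.exp_diagonal, hUinv]
  rw [Matrix.mul_apply]
  refine Finset.sum_congr rfl fun k _ => ?_
  rw [Matrix.mul_diagonal]
  simp only [Matrix.star_apply, star_trivial, Pi.exp_def]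
  rw [← Real.exp_eq_exp_ℝ]
  rw [hU, Matrix.IsHermitian.eigenvectorUnitary_apply]
  ring

set_option maxHeartbeats 1000000

/-- As β → ∞ the subgraph centrality ranking tends to the eigenvector centrality
ranking: for a connected graph with Perron eigenvector p₁ (entrywise positive unit
eigenvector of the largest eigenvalue λ₁, which equals the spectral radius), if
p₁(i) > p₁(j) then for all large enough β one has [e^{βA}]_{ii} > [e^{βA}]_{jj}. -/
theorem stmt11 {N : ℕ} (hN : 2 ≤ N) (G : SimpleGraph (Fin N)) [DecidableRel G.Adj]
    (hconn : G.Connected)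
    (lam : ℝ) (p₁ : Fin N → ℝ)
    (heig : G.adjMatrix ℝ *ᵥ p₁ = lam • p₁)
    (hpos : ∀ t, 0 < p₁ t)
    (hnorm : ∑ t, p₁ t ^ 2 = 1)
    (hmax : ∀ μ ∈ spectrum ℝ (G.adjMatrix ℝ), |μ| ≤ lam)
    (i j : Fin N) (hij : p₁ j < p₁ i) :
    ∃ B > 0, ∀ β : ℝ, B < β →
      (NormedSpace.exp (β • G.adjMatrix ℝ)) j j <
      (NormedSpace.exp (β • G.adjMatrix ℝ)) i i := by
  classical
  set A : Matrix (Fin N) (Fin N) ℝ := G.adjMatrix ℝ with hAdef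
  have hA : A.IsHermitian := by
    ext t s
    simp [Matrix.conjTranspose_apply, hAdef, G.adj_comm]
  have hsymT : Aᵀ = A := G.isSymm_adjMatrix
  set μ : Fin N → ℝ := hA.eigenvalues with hμdef
  set v : Fin N → Fin N → ℝ := fun k => ⇑(hA.eigenvectorBasis k) with hvdef
  -- lam > 0
  have hij_ne : i ≠ j := by rintro rfl; exact absurd hij (lt_irrefl _)
  have hadj : ∃ s, G.Adj i s := by
    obtain ⟨p⟩ := hconn i j
    cases p with
    | nil => exact absurd hij (lt_irrefl _)
    | cons h q => exact ⟨_, h⟩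
  have hlam : 0 < lam := by
    obtain ⟨s0, hs0⟩ := hadj
    have h1 : (A *ᵥ p₁) i = ∑ s ∈ G.neighborFinset i, p₁ s :=
      SimpleGraph.adjMatrix_mulVec_apply _ _ _
    have h2 : 0 < ∑ s ∈ G.neighborFinset i, p₁ s :=
      Finset.sum_pos (fun s _ => hpos s) ⟨s0, (SimpleGraph.mem_neighborFinset _ _ _).mpr hs0⟩
    have h3 : (A *ᵥ p₁) i = lam * p₁ i := by rw [heig]; simp
    have h4 : 0 < lam * p₁ i := by rw [← h3, h1]; exact h2
    rcases mul_pos_iff.mp h4 with ⟨h5, _⟩ | ⟨_, h6⟩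
    · exact h5
    · exact absurd (hpos i) (not_lt.mpr h6.le)
  -- orthonormality facts
  have hON := hA.eigenvectorBasis.orthonormal
  have hnorm1 : ∀ k, ∑ t, (v k t)^2 = 1 := by
    intro k
    have h := hON.1 k
    have h2 : (inner ℝ (hA.eigenvectorBasis k) (hA.eigenvectorBasis k) : ℝ) = ∑ t, (v k t)^2 := by
      rw [PiLp.inner_apply]
      exact Finset.sum_congr rfl fun t _ => by simp [hvdef, sq]
    have h3 : (inner ℝ (hA.eigenvectorBasis k) (hA.eigenvectorBasis k) : ℝ) = 1 := by
      rw [real_inner_self_eq_norm_sq, h]; norm_num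
    rw [← h2, h3]
  have horth : ∀ k l, k ≠ l → ∑ t, v k t * v l t = 0 := by
    intro k l hkl
    have h : (inner ℝ (hA.eigenvectorBasis k) (hA.eigenvectorBasis l) : ℝ) = 0 := hON.2 hkl
    rw [PiLp.inner_apply] at h
    simpa [hvdef, mul_comm] using h
  -- symmetry of dot products
  have hsymdot : ∀ (x y : Fin N → ℝ), x ⬝ᵥ (A *ᵥ y) = (A *ᵥ x) ⬝ᵥ y := by
    intro x y
    rw [Matrix.dotProduct_mulVec, ← Matrix.mulVec_transpose, hsymT]
  have hdot : ∀ k, (lam - μ k) * (v k ⬝ᵥ p₁) = 0 := by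
    intro k
    have h1 : v k ⬝ᵥ (A *ᵥ p₁) = lam * (v k ⬝ᵥ p₁) := by
      rw [heig]; simp [dotProduct_smul]
    have h2 : v k ⬝ᵥ (A *ᵥ p₁) = μ k * (v k ⬝ᵥ p₁) := by
      rw [hsymdot, hA.mulVec_eigenvectorBasis]; simp [smul_dotProduct, hμdef, hvdef]
    linear_combination h2 - h1
  -- existence of top eigenvalue index
  have hex : ∃ k0, μ k0 = lam := by
    by_contra hcon
    push_neg at hcon
    have hdot0 : ∀ k, v k ⬝ᵥ p₁ = 0 := by
      intro k
      rcases mul_eq_zero.mp (hdot k) with h' | h'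
      · exact absurd (by linarith : μ k = lam) (hcon k)
      · exact h'
    set q : EuclideanSpace ℝ (Fin N) := (WithLp.equiv 2 _).symm p₁ with hq
    have hrepr : hA.eigenvectorBasis.repr q = 0 := by
      ext k
      rw [OrthonormalBasis.repr_apply_apply, PiLp.inner_apply]
      have := hdot0 k
      simpa [dotProduct, hq, hvdef, mul_comm] using this
    have hq0 : q = 0 := by
      have := congrArg hA.eigenvectorBasis.repr.symm hrepr
      simpa using this
    have hp0 : p₁ = 0 := by
      simpa [hq] using congrArg (WithLp.equiv 2 (Fin N → ℝ)) hq0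
    have := hpos i
    rw [congrFun hp0 i] at this
    exact absurd this (lt_irrefl _)
  obtain ⟨k0, hk0⟩ := hex
  obtain ⟨c, hc⟩ := my_eig_unique G hconn (by omega) lam p₁ heig hpos (v k0)
    (by rw [← hAdef, hA.mulVec_eigenvectorBasis,
          show hA.eigenvalues k0 = lam from hk0])
  have hc2 : c^2 = 1 := by
    have h := hnorm1 k0
    rw [hc] at h
    simp only [Pi.smul_apply, smul_eq_mul, mul_pow] at h
    rw [← Finset.mul_sum, hnorm, mul_one] at h
    exact h
  have hvk0 : ∀ t, (v k0 t)^2 = p₁ t ^2 := by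
    intro t
    rw [hc]
    simp only [Pi.smul_apply, smul_eq_mul, mul_pow, hc2, one_mul]
  -- all other eigenvalues are < lam
  have hlt : ∀ k, k ≠ k0 → μ k < lam := by
    intro k hk
    have habs : |μ k| ≤ lam := hmax _ (hA.eigenvalues_mem_spectrum_real k)
    have hne : μ k ≠ lam := by
      intro hkeq
      obtain ⟨c', hc'⟩ := my_eig_unique G hconn (by omega) lam p₁ heig hpos (v k)
        (by rw [← hAdef, hA.mulVec_eigenvectorBasis,
              show hA.eigenvalues k = lam from hkeq])
      have hc'2 : c'^2 = 1 := by
        have h := hnorm1 k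
        rw [hc'] at h
        simp only [Pi.smul_apply, smul_eq_mul, mul_pow] at h
        rw [← Finset.mul_sum, hnorm, mul_one] at h
        exact h
      have h0 : ∑ t, v k t * v k0 t = 0 := horth k k0 hk
      rw [hc, hc'] at h0
      simp only [Pi.smul_apply, smul_eq_mul] at h0
      have hcc : ∑ t, (c' * p₁ t) * (c * p₁ t) = c' * c := by
        calc ∑ t, (c' * p₁ t) * (c * p₁ t) = (c' * c) * ∑ t, p₁ t ^2 := by
              rw [Finset.mul_sum]
              exact Finset.sum_congr rfl fun t _ => by ring
          _ = c' * c := by rw [hnorm, mul_one]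
      rw [hcc] at h0
      rcases mul_eq_zero.mp h0 with h' | h'
      · rw [h'] at hc'2; norm_num at hc'2
      · rw [h'] at hc2; norm_num at hc2
    exact lt_of_le_of_ne (le_trans (le_abs_self _) habs) hne
  -- second largest eigenvalue
  have hcard : (Finset.univ.erase k0).Nonempty := by
    rw [← Finset.card_pos, Finset.card_erase_of_mem (Finset.mem_univ _), Finset.card_univ,
      Fintype.card_fin]
    omega
  set μ' : ℝ := (Finset.univ.erase k0).sup' hcard μ with hμ'def
  have hμ'lt : μ' < lam := by
    rw [hμ'def, Finset.sup'_lt_iff]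
    intro k hk
    exact hlt k (Finset.ne_of_mem_erase hk)
  have hμ'ge : ∀ k ∈ Finset.univ.erase k0, μ k ≤ μ' := fun k hk => Finset.le_sup' μ hk
  have hδ : 0 < p₁ i ^2 - p₁ j ^2 := by nlinarith [hpos j, hpos i, hij]
  set δ : ℝ := p₁ i ^2 - p₁ j ^2 with hδdef
  refine ⟨max 1 (Real.log ((N:ℝ)/δ) / (lam - μ')), lt_of_lt_of_le zero_lt_one (le_max_left _ _),
    fun β hβ => ?_⟩
  have hβ1 : 1 < β := lt_of_le_of_lt (le_max_left _ _) hβ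
  have hβpos : 0 < β := lt_trans zero_lt_one hβ1
  have hgap : 0 < lam - μ' := by linarith
  have hNpos : (0:ℝ) < (N:ℝ) := by
    have : 0 < N := by omega
    exact_mod_cast this
  have hNδ : 0 < (N:ℝ)/δ := div_pos hNpos hδ
  have hlog : Real.log ((N:ℝ)/δ) < β * (lam - μ') := by
    have h1 : Real.log ((N:ℝ)/δ) / (lam - μ') < β := lt_of_le_of_lt (le_max_right _ _) hβ
    have := (div_lt_iff₀ hgap).mp h1
    linarith [this]
  have hexp : (N:ℝ)/δ < Real.exp (β * (lam - μ')) := by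
    calc (N:ℝ)/δ = Real.exp (Real.log ((N:ℝ)/δ)) := (Real.exp_log hNδ).symm
      _ < Real.exp (β * (lam - μ')) := Real.exp_lt_exp.mpr hlog
  have hkey : (N:ℝ) * Real.exp (β * μ') < Real.exp (β * lam) * δ := by
    have hE : Real.exp (β * lam) = Real.exp (β * μ') * Real.exp (β * (lam - μ')) := by
      rw [← Real.exp_add]; ring_nf
    have h2 : (N:ℝ) < Real.exp (β * (lam - μ')) * δ := by
      have := (div_lt_iff₀ hδ).mp hexp
      linarith
    rw [hE]
    nlinarith [Real.exp_pos (β * μ')]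
  have hFi : (NormedSpace.exp (β • A)) i i = ∑ k, Real.exp (β * μ k) * (v k i)^2 :=
    my_exp_diag A hA β i
  have hFj : (NormedSpace.exp (β • A)) j j = ∑ k, Real.exp (β * μ k) * (v k j)^2 :=
    my_exp_diag A hA β j
  rw [hFi, hFj, ← sub_pos, ← Finset.sum_sub_distrib]
  have hsplit : (∑ k, (Real.exp (β * μ k) * (v k i)^2 - Real.exp (β * μ k) * (v k j)^2))
      = Real.exp (β * lam) * δ
        + ∑ k ∈ Finset.univ.erase k0, Real.exp (β * μ k) * ((v k i)^2 - (v k j)^2) := by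
    rw [← Finset.add_sum_erase _ _ (Finset.mem_univ k0)]
    congr 1
    · rw [hvk0 i, hvk0 j, hk0, hδdef]; ring
    · exact Finset.sum_congr rfl fun k _ => by ring
  rw [hsplit]
  have hbound : ∀ k ∈ Finset.univ.erase k0,
      -(Real.exp (β * μ')) ≤ Real.exp (β * μ k) * ((v k i)^2 - (v k j)^2) := by
    intro k hk
    have h1 : (v k j)^2 ≤ 1 := by
      have h := hnorm1 k
      have h2 : (v k j)^2 ≤ ∑ t, (v k t)^2 :=
        Finset.single_le_sum (f := fun t => (v k t)^2) (fun t _ => sq_nonneg _)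
          (Finset.mem_univ j)
      linarith
    have h2 : Real.exp (β * μ k) ≤ Real.exp (β * μ') :=
      Real.exp_le_exp.mpr (mul_le_mul_of_nonneg_left (hμ'ge k hk) hβpos.le)
    have h3 := Real.exp_pos (β * μ k)
    nlinarith [sq_nonneg (v k i)]
  have hsum : -((N:ℝ) * Real.exp (β * μ'))
      ≤ ∑ k ∈ Finset.univ.erase k0, Real.exp (β * μ k) * ((v k i)^2 - (v k j)^2) := by
    have h := Finset.card_nsmul_le_sum (Finset.univ.erase k0) _ _ hbound
    rw [nsmul_eq_mul] at h
    have hcard' : ((Finset.univ.erase k0).card : ℝ) ≤ (N:ℝ) := by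
      rw [Finset.card_erase_of_mem (Finset.mem_univ _), Finset.card_univ, Fintype.card_fin]
      exact_mod_cast Nat.sub_le N 1
    nlinarith [Real.exp_pos (β * μ')]
  linarith
end

section
/- Let G be a connected finite simple undirected graph on N ≥ 2 vertices with adjacency matrix A and Perron eigenvector p_1 (the entrywise positive unit eigenvector associated with the largest eigenvalue λ_1). For β → ∞ the ranking obtained by total communicability tends to the eigenvector centrality ranking: for any two vertices v_i, v_j with p_1(i) > p_1(j), there exists B > 0 such that for all β > B one has [e^{βA}𝟙]_i > [e^{βA}𝟙]_j. -/
open Matrix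


lemma aux_zero_prop {N : ℕ} (G : SimpleGraph (Fin N)) [DecidableRel G.Adj]
    (hconn : G.Connected) {lam : ℝ} {w : Fin N → ℝ}
    (hw : G.adjMatrix ℝ *ᵥ w = lam • w) (hwnn : ∀ t, 0 ≤ w t) {k₀ : Fin N} (hk₀ : w k₀ = 0) :
    ∀ l, w l = 0 := by
  have key : ∀ k l : Fin N, G.Adj k l → w k = 0 → w l = 0 := by
    intro k l hkl hk
    have h1 : (G.adjMatrix ℝ *ᵥ w) k = 0 := by rw [hw]; simp [hk]
    rw [mulVec, dotProduct] at h1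
    have hterms : ∀ m ∈ Finset.univ, 0 ≤ G.adjMatrix ℝ k m * w m := by
      intro m _
      refine mul_nonneg ?_ (hwnn m)
      simp only [SimpleGraph.adjMatrix_apply]
      split_ifs <;> norm_num
    have := (Finset.sum_eq_zero_iff_of_nonneg hterms).mp h1 l (Finset.mem_univ l)
    simpa [SimpleGraph.adjMatrix_apply, hkl] using this
  have main : ∀ (a b : Fin N) (p : G.Walk a b), w a = 0 → w b = 0 := by
    intro a b p
    induction p with
    | nil => exact id
    | cons h q ih => exact fun ha => ih (key _ _ h ha)
  intro l
  obtain ⟨p⟩ := hconn k₀ l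
  exact main _ _ p hk₀

lemma aux_neighbor {N : ℕ} (hN : 2 ≤ N) (G : SimpleGraph (Fin N))
    (hconn : G.Connected) (k : Fin N) : ∃ l, G.Adj k l := by
  have : Nontrivial (Fin N) := Fin.nontrivial_iff_two_le.mpr hN
  obtain ⟨k', hk'⟩ := exists_ne k
  obtain ⟨p⟩ := hconn k k'
  cases p with
  | nil => exact absurd rfl hk'.symm
  | cons h q => exact ⟨_, h⟩

lemma aux_lam_pos {N : ℕ} (hN : 2 ≤ N) (G : SimpleGraph (Fin N)) [DecidableRel G.Adj]
    (hconn : G.Connected) {lam : ℝ} {p₁ : Fin N → ℝ}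
    (heig : G.adjMatrix ℝ *ᵥ p₁ = lam • p₁) (hpos : ∀ t, 0 < p₁ t) : 0 < lam := by
  have hN0 : 0 < N := by omega
  set k : Fin N := ⟨0, hN0⟩
  obtain ⟨l, hl⟩ := aux_neighbor hN G hconn k
  have h1 : (G.adjMatrix ℝ *ᵥ p₁) k = lam * p₁ k := by rw [heig]; simp
  rw [mulVec, dotProduct] at h1
  have hge : G.adjMatrix ℝ k l * p₁ l ≤ ∑ m, G.adjMatrix ℝ k m * p₁ m := by
    refine Finset.single_le_sum (f := fun m => G.adjMatrix ℝ k m * p₁ m) ?_ (Finset.mem_univ l)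
    intro m _
    refine mul_nonneg ?_ (hpos m).le
    simp only [SimpleGraph.adjMatrix_apply]
    split_ifs <;> norm_num
  rw [h1] at hge
  simp only [SimpleGraph.adjMatrix_apply, hl, if_true, one_mul] at hge
  nlinarith [hpos l, hpos k]

lemma aux_perron {N : ℕ} (hN : 2 ≤ N) (G : SimpleGraph (Fin N)) [DecidableRel G.Adj]
    (hconn : G.Connected) {lam : ℝ} {p₁ : Fin N → ℝ}
    (heig : G.adjMatrix ℝ *ᵥ p₁ = lam • p₁) (hpos : ∀ t, 0 < p₁ t)
    {v : Fin N → ℝ} (hv : G.adjMatrix ℝ *ᵥ v = lam • v) : ∃ t : ℝ, v = t • p₁ := by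
  have hN0 : 0 < N := by omega
  obtain ⟨k₀, -, hk₀⟩ := Finset.exists_min_image Finset.univ (fun k => v k / p₁ k)
    ⟨⟨0, hN0⟩, Finset.mem_univ _⟩
  set t : ℝ := v k₀ / p₁ k₀ with ht
  refine ⟨t, ?_⟩
  set w : Fin N → ℝ := v - t • p₁ with hwdef
  have hw : G.adjMatrix ℝ *ᵥ w = lam • w := by
    rw [hwdef, mulVec_sub, mulVec_smul, hv, heig, smul_comm, ← smul_sub]
  have hwnn : ∀ s, 0 ≤ w s := by
    intro s
    have := hk₀ s (Finset.mem_univ s)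
    have hps := hpos s
    simp only [hwdef, Pi.sub_apply, Pi.smul_apply, smul_eq_mul, sub_nonneg]
    rw [div_le_div_iff₀ (hpos k₀) hps] at this
    calc t * p₁ s = v k₀ / p₁ k₀ * p₁ s := rfl
      _ ≤ v s := by
          rw [div_mul_eq_mul_div, div_le_iff₀ (hpos k₀)]
          linarith
  have hwk₀ : w k₀ = 0 := by
    simp only [hwdef, Pi.sub_apply, Pi.smul_apply, smul_eq_mul, ht]
    rw [div_mul_cancel₀ _ (hpos k₀).ne', sub_self]
  have := aux_zero_prop G hconn hw hwnn hwk₀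
  funext s
  have hs := this s
  simp only [hwdef, Pi.sub_apply, Pi.smul_apply, smul_eq_mul, sub_eq_zero] at hs
  simpa using hs

lemma aux_exp_entry {N : ℕ} (A : Matrix (Fin N) (Fin N) ℝ) (hA : A.IsHermitian) (β : ℝ)
    (t : Fin N) :
    (NormedSpace.exp (β • A) *ᵥ (fun _ => 1)) t
      = ∑ k, Real.exp (β * hA.eigenvalues k) * (hA.eigenvectorBasis k) t
          * (∑ s, (hA.eigenvectorBasis k) s) := by
  set U : Matrix (Fin N) (Fin N) ℝ := (hA.eigenvectorUnitary : Matrix (Fin N) (Fin N) ℝ) with hUdef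
  have hU2 : U * star U = 1 := (Matrix.mem_unitaryGroup_iff).mp hA.eigenvectorUnitary.2
  have hU1 : star U * U = 1 := (Matrix.mem_unitaryGroup_iff').mp hA.eigenvectorUnitary.2
  have hUunit : IsUnit U := ⟨⟨U, star U, hU2, hU1⟩, rfl⟩
  have hUinv : U⁻¹ = star U := Matrix.inv_eq_right_inv hU2
  have hspec : β • A = U * diagonal (fun k => β * hA.eigenvalues k) * star U := by
    conv_lhs => rw [hA.spectral_theorem, Unitary.conjStarAlgAut_apply]
    rw [← smul_mul_assoc, ← mul_smul_comm, ← diagonal_smul]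
    congr 2
  have hexp : NormedSpace.exp (β • A)
      = U * diagonal (fun k => Real.exp (β * hA.eigenvalues k)) * star U := by
    rw [hspec, ← hUinv, Matrix.exp_conj U _ hUunit, Matrix.exp_diagonal]
    congr 2
    rw [Pi.exp_def]
    funext k
    rw [← Real.exp_eq_exp_ℝ]
  rw [hexp]
  rw [mulVec, dotProduct]
  simp only [mul_one]
  have hentry : ∀ s, (U * diagonal (fun k => Real.exp (β * hA.eigenvalues k)) * star U) t s
      = ∑ k, U t k * Real.exp (β * hA.eigenvalues k) * U s k := by
    intro s
    rw [Matrix.mul_apply]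
    refine Finset.sum_congr rfl fun k _ => ?_
    rw [Matrix.mul_diagonal, Matrix.star_apply]
    simp
  rw [Finset.sum_congr rfl fun s _ => hentry s, Finset.sum_comm]
  refine Finset.sum_congr rfl fun k _ => ?_
  rw [← Finset.mul_sum]
  simp only [hUdef, Matrix.IsHermitian.eigenvectorUnitary_apply]
  ring

/-- As β → ∞ the total communicability ranking tends to the eigenvector centrality
ranking: for a connected graph with Perron eigenvector p₁ (entrywise positive unit
eigenvector of the largest eigenvalue λ₁, which equals the spectral radius), if
p₁(i) > p₁(j) then for all large enough β one has [e^{βA}𝟙]_i > [e^{βA}𝟙]_j. -/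
theorem stmt13 {N : ℕ} (hN : 2 ≤ N) (G : SimpleGraph (Fin N)) [DecidableRel G.Adj]
    (hconn : G.Connected)
    (lam : ℝ) (p₁ : Fin N → ℝ)
    (heig : G.adjMatrix ℝ *ᵥ p₁ = lam • p₁)
    (hpos : ∀ t, 0 < p₁ t)
    (hnorm : ∑ t, p₁ t ^ 2 = 1)
    (hmax : ∀ μ ∈ spectrum ℝ (G.adjMatrix ℝ), |μ| ≤ lam)
    (i j : Fin N) (hij : p₁ j < p₁ i) :
    ∃ B > 0, ∀ β : ℝ, B < β →
      (NormedSpace.exp (β • G.adjMatrix ℝ) *ᵥ (fun _ => 1)) j <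
      (NormedSpace.exp (β • G.adjMatrix ℝ) *ᵥ (fun _ => 1)) i := by
  have hN0 : 0 < N := by omega
  set A : Matrix (Fin N) (Fin N) ℝ := G.adjMatrix ℝ with hAdef
  have hsymm : Aᵀ = A := G.isSymm_adjMatrix
  have hA : A.IsHermitian := by
    show Aᴴ = A
    rw [conjTranspose_eq_transpose_of_trivial]
    exact hsymm
  set μ : Fin N → ℝ := hA.eigenvalues with hμdef
  set u : Fin N → Fin N → ℝ := fun k s => hA.eigenvectorBasis k s with hudef
  -- eigen equations
  have hueig : ∀ k, A *ᵥ u k = μ k • u k := fun k => hA.mulVec_eigenvectorBasis k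
  -- orthonormality in sum form
  have horth : ∀ k l, ∑ s, u k s * u l s = if k = l then 1 else 0 := by
    intro k l
    have h := (orthonormal_iff_ite (𝕜 := ℝ)).mp hA.eigenvectorBasis.orthonormal k l
    rw [PiLp.inner_apply] at h
    simp [RCLike.inner_apply] at h
    rw [← h]
    exact Finset.sum_congr rfl fun s _ => mul_comm _ _
  -- symmetry trick: eigenvalue of any nontrivially-overlapping eigenvector is lam
  have hoverlap : ∀ k, (μ k - lam) * (u k ⬝ᵥ p₁) = 0 := by
    intro k
    have e1 : (A *ᵥ u k) ⬝ᵥ p₁ = μ k * (u k ⬝ᵥ p₁) := by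
      rw [hueig k, smul_dotProduct, smul_eq_mul]
    have e2 : u k ⬝ᵥ (A *ᵥ p₁) = (A *ᵥ u k) ⬝ᵥ p₁ := by
      rw [dotProduct_mulVec, ← mulVec_transpose, hsymm]
    have e3 : u k ⬝ᵥ (A *ᵥ p₁) = lam * (u k ⬝ᵥ p₁) := by
      rw [heig, dotProduct_smul]
      rfl
    rw [sub_mul]
    rw [e2, e1] at e3
    linarith
  -- some eigenvector overlaps p₁
  have hexists : ∃ k, u k ⬝ᵥ p₁ ≠ 0 := by
    by_contra h
    push_neg at h
    have hq : ∑ k, (inner ℝ (hA.eigenvectorBasis k)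
        ((WithLp.equiv 2 (Fin N → ℝ)).symm p₁) : ℝ) • hA.eigenvectorBasis k
        = (WithLp.equiv 2 (Fin N → ℝ)).symm p₁ :=
      hA.eigenvectorBasis.sum_repr' _
    have hzero : ∀ k, (inner ℝ (hA.eigenvectorBasis k)
        ((WithLp.equiv 2 (Fin N → ℝ)).symm p₁) : ℝ) = 0 := by
      intro k
      rw [PiLp.inner_apply]
      simp [RCLike.inner_apply, dotProduct]
      have hk := h k
      simp only [dotProduct] at hk
      rw [← hk]
      exact Finset.sum_congr rfl fun s _ => mul_comm _ _
    rw [Finset.sum_congr rfl (fun k _ => by rw [hzero k, zero_smul])] at hq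
    rw [Finset.sum_const_zero] at hq
    have : p₁ ⟨0, hN0⟩ = 0 := by
      have := congrArg (fun q => (WithLp.equiv 2 (Fin N → ℝ)) q ⟨0, hN0⟩) hq
      simpa using this.symm
    exact (hpos ⟨0, hN0⟩).ne' this
  obtain ⟨k₀, hk₀⟩ := hexists
  have hμk₀ : μ k₀ = lam := by
    have := hoverlap k₀
    rcases mul_eq_zero.mp this with h | h
    · linarith [sub_eq_zero.mp (by linarith : μ k₀ - lam = 0)]
    · exact absurd h hk₀
  -- u k₀ is a multiple of p₁ with square 1
  obtain ⟨t, htk₀⟩ := aux_perron hN G hconn heig hpos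
    (v := u k₀) (by rw [hueig k₀, hμk₀])
  have ht2 : t ^ 2 = 1 := by
    have h1 : (∑ s, (t • p₁) s * (t • p₁) s : ℝ) = 1 := by
      have h := horth k₀ k₀
      rw [htk₀] at h
      simpa using h
    have : t ^ 2 * ∑ s, p₁ s ^ 2 = 1 := by
      rw [← h1, Finset.mul_sum]
      exact Finset.sum_congr rfl fun s _ => by simp [Pi.smul_apply]; ring
    rwa [hnorm, mul_one] at this
  -- other eigenvalues are strictly below lam
  have hlt : ∀ k, k ≠ k₀ → μ k < lam := by
    intro k hk
    have hle : μ k ≤ lam := by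
      have := hmax (μ k) (hA.eigenvalues_mem_spectrum_real k)
      exact (abs_le.mp this).2
    rcases lt_or_eq_of_le hle with h | h
    · exact h
    · exfalso
      obtain ⟨s, hs⟩ := aux_perron hN G hconn heig hpos
        (v := u k) (by rw [hueig k, h])
      have hs2 : s ^ 2 = 1 := by
        have h1 : (∑ m, (s • p₁) m * (s • p₁) m : ℝ) = 1 := by
          have h := horth k k
          rw [hs] at h
          simpa using h
        have : s ^ 2 * ∑ m, p₁ m ^ 2 = 1 := by
          rw [← h1, Finset.mul_sum]
          exact Finset.sum_congr rfl fun m _ => by simp [Pi.smul_apply]; ring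
        rwa [hnorm, mul_one] at this
      have h0 := horth k k₀
      rw [if_neg hk, hs, htk₀] at h0
      have : s * t * ∑ m, p₁ m ^ 2 = 0 := by
        rw [← h0, Finset.mul_sum]
        exact Finset.sum_congr rfl fun m _ => by simp [Pi.smul_apply]; ring
      rw [hnorm, mul_one] at this
      rcases mul_eq_zero.mp this with h' | h'
      · rw [h'] at hs2; norm_num at hs2
      · rw [h'] at ht2; norm_num at ht2
  -- constants
  set c : ℝ := ∑ s, p₁ s with hcdef
  have hc : 0 < c := Finset.sum_pos (fun s _ => hpos s) ⟨⟨0, hN0⟩, Finset.mem_univ _⟩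
  set d : ℝ := p₁ i - p₁ j with hddef
  have hd : 0 < d := by simp [hddef]; linarith
  -- the difference formula
  set a : Fin N → ℝ := fun k => (u k i - u k j) * (∑ s, u k s) with hadef
  have hdiff : ∀ β : ℝ,
      (NormedSpace.exp (β • A) *ᵥ (fun _ => 1)) i - (NormedSpace.exp (β • A) *ᵥ (fun _ => 1)) j
      = Real.exp (β * lam) * (d * c + ∑ k ∈ Finset.univ.erase k₀,
          Real.exp (β * (μ k - lam)) * a k) := by
    intro β
    rw [aux_exp_entry A hA β i, aux_exp_entry A hA β j, ← Finset.sum_sub_distrib]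
    have hterm : ∀ k, Real.exp (β * μ k) * (u k) i * (∑ s, u k s)
        - Real.exp (β * μ k) * (u k) j * (∑ s, u k s) = Real.exp (β * μ k) * a k := by
      intro k
      rw [hadef]
      ring
    rw [Finset.sum_congr rfl fun k _ => hterm k]
    rw [← Finset.add_sum_erase _ _ (Finset.mem_univ k₀)]
    have hk₀term : Real.exp (β * μ k₀) * a k₀ = Real.exp (β * lam) * (d * c) := by
      simp only [hμk₀, hadef]
      rw [htk₀]
      have h1 : ((t • p₁) i - (t • p₁) j) * (∑ s, (t • p₁) s) = t ^ 2 * (d * c) := by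
        simp only [Pi.smul_apply, smul_eq_mul, hddef, hcdef, ← Finset.mul_sum]
        ring
      rw [h1, ht2, one_mul]
    rw [hk₀term, mul_add]
    congr 1
    rw [Finset.mul_sum]
    refine Finset.sum_congr rfl fun k _ => ?_
    simp only [hadef]
    rw [← mul_assoc (Real.exp (β * lam)), ← Real.exp_add]
    have harg : β * lam + β * (μ k - lam) = β * μ k := by ring
    rw [harg]
  -- the remainder tends to zero
  have hR : Filter.Tendsto (fun β : ℝ => ∑ k ∈ Finset.univ.erase k₀,
      Real.exp (β * (μ k - lam)) * a k) Filter.atTop (nhds 0) := by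
    have h0 : (0 : ℝ) = ∑ k ∈ Finset.univ.erase k₀, (0 : ℝ) := by simp
    rw [h0]
    refine tendsto_finset_sum _ fun k hk => ?_
    have hneg : μ k - lam < 0 := by
      have := hlt k (Finset.ne_of_mem_erase hk)
      linarith
    have h1 : Filter.Tendsto (fun β : ℝ => β * (μ k - lam)) Filter.atTop Filter.atBot :=
      Filter.Tendsto.atTop_mul_const_of_neg hneg Filter.tendsto_id
    simpa using (Real.tendsto_exp_atBot.comp h1).mul_const (a k)
  -- conclude
  have hev : ∀ᶠ β : ℝ in Filter.atTop, -(d * c) < ∑ k ∈ Finset.univ.erase k₀,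
      Real.exp (β * (μ k - lam)) * a k :=
    hR.eventually (eventually_gt_nhds (by nlinarith))
  rw [Filter.eventually_atTop] at hev
  obtain ⟨b, hb⟩ := hev
  refine ⟨max b 1, lt_of_lt_of_le one_pos (le_max_right _ _), fun β hβ => ?_⟩
  have hβb : b ≤ β := le_trans (le_max_left _ _) hβ.le
  have h2 := hb β hβb
  have h3 : 0 < Real.exp (β * lam) * (d * c + ∑ k ∈ Finset.univ.erase k₀,
      Real.exp (β * (μ k - lam)) * a k) :=
    mul_pos (Real.exp_pos _) (by linarith)
  rw [← hdiff β] at h3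
  exact sub_pos.mp h3
end

section
/- Let G be a finite simple undirected graph on N ≥ 1 vertices with adjacency matrix A, and define the bipartivity measure B = Tr(cosh(A)) / Tr(exp(A)). Then 1/2 < B ≤ 1, and B = 1 if and only if G is bipartite. -/
open Matrix
open scoped Nat

open NormedSpace in
private lemma fin2_aux17 : ∀ a b c : Fin 2, a ≠ b → (¬ b = c ↔ a = c) := by decide

lemma walk_parity17 {V : Type*} {G : SimpleGraph V} (C : G.Coloring (Fin 2)) :
    ∀ {u v : V} (p : G.Walk u v), (Even p.length ↔ C u = C v) := by
  intro u v p
  induction p with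
  | nil => simp
  | @cons u w v h p ih =>
      rw [SimpleGraph.Walk.length_cons, Nat.even_add_one, ih]
      exact fin2_aux17 _ _ _ (C.valid h)

lemma colorable_of_no_odd17 {V : Type*} {G : SimpleGraph V}
    (h : ∀ (v : V) (p : G.Walk v v), ¬ Odd p.length) : G.Colorable 2 := by
  classical
  let rep : V → V := fun v => (G.connectedComponentMk v).out
  have hreach : ∀ v, G.Reachable (rep v) v := fun v =>
    SimpleGraph.ConnectedComponent.exact ((G.connectedComponentMk v).out_eq)
  let len : V → ℕ := fun v => (hreach v).some.length
  refine ⟨SimpleGraph.Coloring.mk (fun v => if Even (len v) then 0 else 1) ?_⟩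
  intro u v huv hc
  have hrep : rep u = rep v := by
    show (G.connectedComponentMk u).out = (G.connectedComponentMk v).out
    rw [SimpleGraph.ConnectedComponent.sound huv.reachable]
  have hpar : Even (len u) ↔ Even (len v) := by
    by_cases h1 : Even (len u) <;> by_cases h2 : Even (len v) <;>
      simp [h1, h2] at hc ⊢
  set p := (hreach u).some with hp
  set q := (hreach v).some with hq
  refine h (rep u)
    (p.append (SimpleGraph.Walk.cons huv ((q.copy hrep.symm rfl).reverse))) ?_
  have hlen : (p.append (SimpleGraph.Walk.cons huv
      ((q.copy hrep.symm rfl).reverse))).length = p.length + (q.length + 1) := by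
    simp [SimpleGraph.Walk.length_append, SimpleGraph.Walk.length_cons,
      SimpleGraph.Walk.length_reverse, SimpleGraph.Walk.length_copy]
  have e1 : p.length = len u := rfl
  have e2 : q.length = len v := rfl
  rw [hlen, Nat.odd_iff, e1, e2]
  rw [Nat.even_iff, Nat.even_iff] at hpar
  omega

open scoped Nat in
open NormedSpace in
lemma hasSum_trace_exp17 {N : ℕ} (M : Matrix (Fin N) (Fin N) ℝ) :
    HasSum (fun n : ℕ => (((n ! : ℕ) : ℝ))⁻¹ * (M ^ n).trace) (exp M).trace := by
  letI : SeminormedRing (Matrix (Fin N) (Fin N) ℝ) := Matrix.linftyOpSemiNormedRing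
  letI : NormedRing (Matrix (Fin N) (Fin N) ℝ) := Matrix.linftyOpNormedRing
  letI : NormedAlgebra ℝ (Matrix (Fin N) (Fin N) ℝ) := Matrix.linftyOpNormedAlgebra
  have hs : Summable fun n : ℕ => (n !⁻¹ : ℝ) • M ^ n := expSeries_summable' M
  have h2 : HasSum (fun n : ℕ => (n !⁻¹ : ℝ) • M ^ n) (exp M) := by
    rw [exp_eq_tsum (𝕂 := ℝ)]; exact hs.hasSum
  have hcont : Continuous (Matrix.traceLinearMap (Fin N) ℝ ℝ) :=
    LinearMap.continuous_of_finiteDimensional _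
  have h3 := h2.mapL ⟨Matrix.traceLinearMap (Fin N) ℝ ℝ, hcont⟩
  simpa [Matrix.trace_smul, smul_eq_mul] using h3

open NormedSpace in
lemma trace_exp_pos17 {N : ℕ} (hN : 0 < N) (M : Matrix (Fin N) (Fin N) ℝ)
    (hsymm : Mᵀ = M) : 0 < (exp M).trace := by
  set E : Matrix (Fin N) (Fin N) ℝ := exp ((2⁻¹ : ℝ) • M) with hE
  have hsq : exp M = E * E := by
    rw [hE, ← Matrix.exp_add_of_commute _ _ (Commute.refl _)]
    congr 1
    rw [← add_smul]; norm_num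
  have hEt : Eᵀ = E := by
    rw [hE, ← Matrix.exp_transpose, Matrix.transpose_smul, hsymm]
  have htr : (exp M).trace = ∑ i, ∑ j, (E i j) ^ 2 := by
    rw [hsq, Matrix.trace]
    refine Finset.sum_congr rfl fun i _ => ?_
    rw [Matrix.diag_apply, Matrix.mul_apply]
    refine Finset.sum_congr rfl fun j _ => ?_
    have h1 : E j i = E i j := by conv_lhs => rw [← hEt, Matrix.transpose_apply]
    rw [h1, sq]
  rw [htr]
  have hne : E ≠ 0 := by
    intro h0
    have hu : IsUnit E := Matrix.isUnit_exp _
    rw [h0, isUnit_zero_iff] at hu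
    have := congrArg (fun M : Matrix (Fin N) (Fin N) ℝ => M ⟨0, hN⟩ ⟨0, hN⟩) hu
    simp at this
  obtain ⟨i, j, hij⟩ : ∃ i j, E i j ≠ 0 := by
    by_contra hc
    push_neg at hc
    exact hne (by ext i j; simp [hc i j])
  have hposij : 0 < (E i j) ^ 2 := by positivity
  calc (0 : ℝ) < ∑ j', (E i j') ^ 2 :=
        Finset.sum_pos' (fun _ _ => by positivity)
          ⟨j, Finset.mem_univ j, hposij⟩
    _ ≤ ∑ i', ∑ j', (E i' j') ^ 2 :=
        Finset.single_le_sum (f := fun i' => ∑ j', (E i' j') ^ 2)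
          (fun _ _ => Finset.sum_nonneg fun _ _ => by positivity) (Finset.mem_univ i)

/-- The bipartivity measure B = Tr(cosh(A))/Tr(exp(A)), where
cosh(A) = (exp(A) + exp(-A))/2, satisfies 1/2 < B ≤ 1, with B = 1 if and only if the
graph is bipartite (i.e., 2-colorable). -/
theorem stmt17 {N : ℕ} (hN : 0 < N) (G : SimpleGraph (Fin N)) [DecidableRel G.Adj]
    (B : ℝ)
    (hB : B = Matrix.trace ((1 / 2 : ℝ) •
        (NormedSpace.exp (G.adjMatrix ℝ) + NormedSpace.exp (-(G.adjMatrix ℝ)))) /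
      Matrix.trace (NormedSpace.exp (G.adjMatrix ℝ))) :
    (1 / 2 < B ∧ B ≤ 1) ∧ (B = 1 ↔ G.Colorable 2) := by
  classical
  set A := G.adjMatrix ℝ with hA
  -- entrywise nonnegativity of powers
  have hApow : ∀ (n : ℕ) (i j : Fin N), 0 ≤ (A ^ n) i j := by
    intro n
    induction n with
    | zero =>
        intro i j; rw [pow_zero]
        by_cases h : i = j <;> simp [Matrix.one_apply, h]
    | succ n ih =>
        intro i j
        rw [pow_succ, Matrix.mul_apply]
        refine Finset.sum_nonneg fun k _ => mul_nonneg (ih i k) ?_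
        by_cases h : G.Adj k j <;> simp [hA, h]
  have ht : ∀ n : ℕ, 0 ≤ (A ^ n).trace :=
    fun n => Finset.sum_nonneg fun i _ => hApow n i i
  -- the two hasSum facts
  have hDsum := hasSum_trace_exp17 A
  have hCsum0 := hasSum_trace_exp17 (-A)
  have hCsum : HasSum (fun n : ℕ =>
      (((n ! : ℕ) : ℝ))⁻¹ * ((-1 : ℝ) ^ n * (A ^ n).trace))
      (NormedSpace.exp (-A)).trace := by
    refine hCsum0.congr_fun fun n => ?_
    have : (-A) ^ n = ((-1 : ℝ) ^ n) • A ^ n := by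
      rw [show -A = (-1 : ℝ) • A by simp, smul_pow]
    rw [this, Matrix.trace_smul, smul_eq_mul]
  set D := (NormedSpace.exp A).trace with hDdef
  set C := (NormedSpace.exp (-A)).trace with hCdef
  have hterm : ∀ n : ℕ, (((n ! : ℕ) : ℝ))⁻¹ * ((-1 : ℝ) ^ n * (A ^ n).trace)
      ≤ (((n ! : ℕ) : ℝ))⁻¹ * (A ^ n).trace := by
    intro n
    have hfac : (0 : ℝ) ≤ (((n ! : ℕ) : ℝ))⁻¹ := by positivity
    refine mul_le_mul_of_nonneg_left ?_ hfac
    rcases Nat.even_or_odd n with he | ho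
    · rw [he.neg_one_pow, one_mul]
    · rw [ho.neg_one_pow]; nlinarith [ht n]
  have hCD : C ≤ D := hasSum_le hterm hCsum hDsum
  have hCpos : 0 < C := by
    refine trace_exp_pos17 hN (-A) ?_
    rw [Matrix.transpose_neg, Matrix.IsSymm.eq (SimpleGraph.isSymm_adjMatrix G)]
  have hDpos : 0 < D := lt_of_lt_of_le hCpos hCD
  -- difference series
  have hfsum : HasSum (fun n : ℕ => (((n ! : ℕ) : ℝ))⁻¹ * (A ^ n).trace
      - (((n ! : ℕ) : ℝ))⁻¹ * ((-1 : ℝ) ^ n * (A ^ n).trace)) (D - C) :=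
    hDsum.sub hCsum
  have hfnonneg : ∀ n : ℕ, 0 ≤ (((n ! : ℕ) : ℝ))⁻¹ * (A ^ n).trace
      - (((n ! : ℕ) : ℝ))⁻¹ * ((-1 : ℝ) ^ n * (A ^ n).trace) :=
    fun n => sub_nonneg.mpr (hterm n)
  have hiff : C = D ↔ ∀ n : ℕ, Odd n → (A ^ n).trace = 0 := by
    constructor
    · intro hcd n hodd
      have hle := le_hasSum hfsum n (fun m _ => hfnonneg m)
      rw [show D - C = 0 by linarith] at hle
      have heq : (((n ! : ℕ) : ℝ))⁻¹ * (A ^ n).trace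
          - (((n ! : ℕ) : ℝ))⁻¹ * ((-1 : ℝ) ^ n * (A ^ n).trace) = 0 :=
        le_antisymm hle (hfnonneg n)
      rw [hodd.neg_one_pow] at heq
      have hfac : (0 : ℝ) < (((n ! : ℕ) : ℝ))⁻¹ := by positivity
      nlinarith [ht n]
    · intro h0
      have hzero : (fun n : ℕ => (((n ! : ℕ) : ℝ))⁻¹ * (A ^ n).trace
          - (((n ! : ℕ) : ℝ))⁻¹ * ((-1 : ℝ) ^ n * (A ^ n).trace)) = fun _ => (0 : ℝ) := by
        funext n
        rcases Nat.even_or_odd n with he | ho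
        · rw [he.neg_one_pow]; ring
        · rw [h0 n ho]; ring
      rw [hzero] at hfsum
      have := hfsum.unique hasSum_zero
      linarith
  -- trace of powers vs closed walks
  have hwalk : ∀ (n : ℕ) (i : Fin N), (A ^ n) i i
      = (Fintype.card {p : G.Walk i i | p.length = n} : ℝ) := by
    intro n i
    rw [hA, SimpleGraph.adjMatrix_pow_apply_eq_card_walk]
  have hbip : (∀ n : ℕ, Odd n → (A ^ n).trace = 0) ↔ G.Colorable 2 := by
    constructor
    · intro h0
      refine colorable_of_no_odd17 fun v p hodd => ?_
      have htr0 := h0 p.length hodd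
      have hdiag : (A ^ p.length) v v = 0 := by
        have := (Finset.sum_eq_zero_iff_of_nonneg
          (fun i _ => hApow p.length i i)).mp htr0 v (Finset.mem_univ v)
        exact this
      rw [hwalk] at hdiag
      have : Nonempty {p' : G.Walk v v | p'.length = p.length} := ⟨⟨p, rfl⟩⟩
      have hpos := Fintype.card_pos (α := {p' : G.Walk v v | p'.length = p.length})
      rw [show (Fintype.card {p' : G.Walk v v | p'.length = p.length}) = 0 from
        Nat.cast_eq_zero.mp hdiag] at hpos
      exact lt_irrefl 0 hpos
    · intro hcol n hodd
      obtain ⟨C2⟩ := hcol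
      have hdiag : ∀ i : Fin N, (A ^ n) i i = 0 := by
        intro i
        rw [hwalk]
        have : IsEmpty {p : G.Walk i i | p.length = n} := by
          refine ⟨fun ⟨p, hp⟩ => ?_⟩
          have heven : Even p.length := (walk_parity17 C2 p).mpr rfl
          rw [Set.mem_setOf_eq] at hp
          rw [hp] at heven
          exact (Nat.not_even_iff_odd.mpr hodd) heven
        rw [Fintype.card_eq_zero]; norm_num
      rw [Matrix.trace]
      exact Finset.sum_eq_zero fun i _ => hdiag i
  -- numeric conclusion
  have hBval : B = (1 / 2 * (D + C)) / D := by
    rw [hB, Matrix.trace_smul, Matrix.trace_add, smul_eq_mul, ← hDdef, ← hCdef]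
  constructor
  · constructor
    · rw [hBval, lt_div_iff₀ hDpos]; linarith
    · rw [hBval, div_le_one hDpos]; linarith
  · rw [hBval, div_eq_one_iff_eq hDpos.ne', ← hbip, ← hiff]
    constructor <;> intro h <;> linarith
end
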